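/- Let a, b, c be pairwise distinct real numbers and let α, β, γ all be nonzero. Then there exists ε > 0 such that for every r with 0 < r < ε, the set { μ ∈ R_{α,β,γ} : ‖μ‖ = r } has exactly two elements, where ‖·‖ is the Euclidean norm on ℝ³. -/

import Mathlib

open Set Module

set_option maxHeartbeats 1000000

private lemma sq_pos' {x : ℝ} (hx : x ≠ 0) : 0 < x ^ 2 :=
  lt_of_le_of_ne (sq_nonneg x) (Ne.symm (pow_ne_zero 2 hx))

private lemma rank_le_one_iff_row (M : Matrix (Fin 2) (Fin 3) ℝ) (hv : M 1 ≠ 0) :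
    M.rank ≤ 1 ↔ ∃ t : ℝ, M 0 = t • M 1 := by
  constructor
  · intro h
    by_contra hc
    push_neg at hc
    have hli : LinearIndependent ℝ M :=
      linearIndependent_fin2.mpr ⟨hv, fun t ht => hc t ht.symm⟩
    have := hli.rank_matrix
    simp [Fintype.card_fin] at this
    omega
  · rintro ⟨t, ht⟩
    rw [Matrix.rank_eq_finrank_span_row]
    have hsub : Submodule.span ℝ (Set.range M) ≤ Submodule.span ℝ {M 1} := by
      rw [Submodule.span_le]
      rintro x ⟨i, rfl⟩
      fin_cases i
      · show M 0 ∈ _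
        rw [ht]
        exact Submodule.smul_mem _ _ (Submodule.subset_span rfl)
      · exact Submodule.subset_span rfl
    calc finrank ℝ (Submodule.span ℝ (Set.range M)) ≤ finrank ℝ (Submodule.span ℝ {M 1}) :=
          Submodule.finrank_mono hsub
      _ = 1 := finrank_span_singleton hv

private lemma norm_eq3 (μ : EuclideanSpace ℝ (Fin 3)) :
    ‖μ‖ = Real.sqrt ((μ 0)^2 + (μ 1)^2 + (μ 2)^2) := by
  rw [EuclideanSpace.norm_eq]
  congr 1
  simp [Fin.sum_univ_three, Real.norm_eq_abs, sq_abs]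

private lemma mem_iff (a b c α β γ : ℝ) (hα : α ≠ 0) (hβ : β ≠ 0) (hγ : γ ≠ 0)
    (μ : EuclideanSpace ℝ (Fin 3)) (r : ℝ) (hr : 0 < r) :
    ((!![2*a*(μ 0) + α, 2*b*(μ 1) + β, 2*c*(μ 2) + γ; μ 0, μ 1, μ 2] :
        Matrix (Fin 2) (Fin 3) ℝ).rank ≤ 1 ∧ ‖μ‖ = r)
    ↔ ∃ t : ℝ, (t-2*a) ≠ 0 ∧ (t-2*b) ≠ 0 ∧ (t-2*c) ≠ 0 ∧
        μ 0 = α/(t-2*a) ∧ μ 1 = β/(t-2*b) ∧ μ 2 = γ/(t-2*c) ∧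
        α^2/(t-2*a)^2 + β^2/(t-2*b)^2 + γ^2/(t-2*c)^2 = r^2 := by
  set A : Matrix (Fin 2) (Fin 3) ℝ :=
    !![2*a*(μ 0) + α, 2*b*(μ 1) + β, 2*c*(μ 2) + γ; μ 0, μ 1, μ 2] with hA
  constructor
  · rintro ⟨hrank, hnorm⟩
    have hsum : (μ 0)^2 + (μ 1)^2 + (μ 2)^2 = r^2 := by
      rw [← hnorm, norm_eq3]
      exact (Real.sq_sqrt (by positivity)).symm
    have hco : ¬((μ 0) = 0 ∧ (μ 1) = 0 ∧ (μ 2) = 0) := by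
      rintro ⟨h0, h1, h2⟩
      rw [h0, h1, h2] at hsum
      nlinarith
    have hA1 : A 1 ≠ 0 := by
      intro h
      refine hco ⟨?_, ?_, ?_⟩
      · have := congrFun h 0; simpa [hA] using this
      · have := congrFun h 1; simpa [hA] using this
      · have := congrFun h 2; simpa [hA] using this
    obtain ⟨t, hrow⟩ := (rank_le_one_iff_row A hA1).mp hrank
    have e0 : 2*a*(μ 0) + α = t * (μ 0) := by
      have := congrFun hrow 0; simpa [hA] using this
    have e1 : 2*b*(μ 1) + β = t * (μ 1) := by
      have := congrFun hrow 1; simpa [hA] using this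
    have e2 : 2*c*(μ 2) + γ = t * (μ 2) := by
      have := congrFun hrow 2; simpa [hA] using this
    have hta : (t-2*a) ≠ 0 := by
      intro h
      exact hα (by linear_combination e0 + (μ 0) * h)
    have htb : (t-2*b) ≠ 0 := by
      intro h
      exact hβ (by linear_combination e1 + (μ 1) * h)
    have htc : (t-2*c) ≠ 0 := by
      intro h
      exact hγ (by linear_combination e2 + (μ 2) * h)
    have h0 : μ 0 = α/(t-2*a) := by
      rw [eq_div_iff hta]; linear_combination -e0
    have h1 : μ 1 = β/(t-2*b) := by
      rw [eq_div_iff htb]; linear_combination -e1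
    have h2 : μ 2 = γ/(t-2*c) := by
      rw [eq_div_iff htc]; linear_combination -e2
    refine ⟨t, hta, htb, htc, h0, h1, h2, ?_⟩
    rw [h0, h1, h2, div_pow, div_pow, div_pow] at hsum
    exact hsum
  · rintro ⟨t, hta, htb, htc, h0, h1, h2, hsum⟩
    have hA1 : A 1 ≠ 0 := by
      intro h
      have hc0 : μ 0 = 0 := by have := congrFun h 0; simpa [hA] using this
      rw [h0] at hc0
      exact div_ne_zero hα hta hc0
    constructor
    · refine (rank_le_one_iff_row A hA1).mpr ⟨t, ?_⟩
      funext i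
      fin_cases i
      · show A 0 0 = t * A 1 0
        simp only [hA, Matrix.cons_val', Matrix.cons_val_zero, Matrix.empty_val',
          Matrix.cons_val_fin_one, Matrix.cons_val_one, Matrix.head_cons, Matrix.of_apply,
          Matrix.head_fin_const]
        rw [h0]
        field_simp
        ring
      · show A 0 1 = t * A 1 1
        simp only [hA, Matrix.cons_val', Matrix.cons_val_zero, Matrix.empty_val',
          Matrix.cons_val_fin_one, Matrix.cons_val_one, Matrix.head_cons, Matrix.of_apply,
          Matrix.head_fin_const]
        rw [h1]
        field_simp
        ring
      · show A 0 2 = t * A 1 2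
        simp only [hA, Matrix.cons_val', Matrix.cons_val_zero, Matrix.empty_val', Matrix.cons_val_two, Matrix.tail_cons,
          Matrix.cons_val_fin_one, Matrix.cons_val_one, Matrix.head_cons, Matrix.of_apply,
          Matrix.head_fin_const]
        rw [h2]
        field_simp
        ring
    · rw [norm_eq3, h0, h1, h2, div_pow, div_pow, div_pow, hsum]
      exact Real.sqrt_sq hr.le

private lemma pos_side (a b c α β γ M : ℝ) (hα : α ≠ 0) (hβ : β ≠ 0) (hγ : γ ≠ 0)
    (ha : 2*a + 1 ≤ M) (hb : 2*b + 1 ≤ M) (hc : 2*c + 1 ≤ M) :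
    ∃ δ > 0, ∀ r : ℝ, 0 < r → r^2 < δ →
      ∃! l : ℝ, M ≤ l ∧ α^2/(l-2*a)^2 + β^2/(l-2*b)^2 + γ^2/(l-2*c)^2 = r^2 := by
  set g : ℝ → ℝ := fun l => α^2/(l-2*a)^2 + β^2/(l-2*b)^2 + γ^2/(l-2*c)^2 with hg
  have hα2 := sq_pos' hα
  have hβ2 := sq_pos' hβ
  have hγ2 := sq_pos' hγ
  have hδ : 0 < g M := by
    have h1 : 0 < α^2/(M-2*a)^2 := div_pos hα2 (by nlinarith)
    have h2 : 0 ≤ β^2/(M-2*b)^2 := by positivity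
    have h3 : 0 ≤ γ^2/(M-2*c)^2 := by positivity
    simp only [hg]; linarith
  refine ⟨g M, hδ, ?_⟩
  intro r hr hrδ
  have hanti : StrictAntiOn g (Ici M) := by
    intro x hx y hy hxy
    simp only [mem_Ici] at hx hy
    have k1 : α^2/(y-2*a)^2 < α^2/(x-2*a)^2 :=
      div_lt_div_of_pos_left hα2 (by nlinarith) (by nlinarith)
    have k2 : β^2/(y-2*b)^2 < β^2/(x-2*b)^2 :=
      div_lt_div_of_pos_left hβ2 (by nlinarith) (by nlinarith)
    have k3 : γ^2/(y-2*c)^2 < γ^2/(x-2*c)^2 :=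
      div_lt_div_of_pos_left hγ2 (by nlinarith) (by nlinarith)
    simp only [hg]; linarith
  have hcont : ContinuousOn g (Ici M) := by
    have hterm : ∀ d : ℝ, 2*d + 1 ≤ M → ∀ k : ℝ,
        ContinuousOn (fun l : ℝ => k^2/(l-2*d)^2) (Ici M) := by
      intro d hd k
      refine ContinuousOn.div continuousOn_const (by fun_prop) ?_
      intro x hx
      simp only [mem_Ici] at hx
      have : (1:ℝ) ≤ x - 2*d := by linarith
      nlinarith
    exact ((hterm a ha α).add (hterm b hb β)).add (hterm c hc γ)
  set C : ℝ := α^2 + β^2 + γ^2 with hC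
  have hC0 : 0 < C := by simp only [hC]; linarith
  set s : ℝ := Real.sqrt C / r with hs
  have hs0 : 0 ≤ s := div_nonneg (Real.sqrt_nonneg C) hr.le
  have hss : s^2 = C/r^2 := by
    simp only [hs, div_pow, Real.sq_sqrt hC0.le]
  set B : ℝ := M + s with hB
  have hMB : M ≤ B := by simp only [hB]; linarith
  have hterm2 : ∀ d k : ℝ, k ≠ 0 → 2*d + 1 ≤ M → k^2/(B-2*d)^2 < k^2*r^2/C := by
    intro d k hk hd
    have hd1 : 1 + s ≤ B - 2*d := by simp only [hB]; linarith
    have hcr : 0 < C/r^2 := div_pos hC0 (by positivity)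
    have hlt : C/r^2 < (B-2*d)^2 := by nlinarith
    have := div_lt_div_of_pos_left (sq_pos' hk) hcr hlt
    calc k^2/(B-2*d)^2 < k^2/(C/r^2) := this
      _ = k^2*r^2/C := div_div_eq_mul_div _ _ _
  have hBr : g B < r^2 := by
    have k1 := hterm2 a α hα ha
    have k2 := hterm2 b β hβ hb
    have k3 := hterm2 c γ hγ hc
    have hsum : α^2*r^2/C + β^2*r^2/C + γ^2*r^2/C = r^2 := by
      field_simp; ring
    simp only [hg]; linarith
  obtain ⟨l, hlmem, hgl⟩ := intermediate_value_Icc' hMB (hcont.mono Icc_subset_Ici_self)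
    ⟨hBr.le, hrδ.le⟩
  exact ⟨l, ⟨hlmem.1, hgl⟩, fun y hy =>
    hanti.injOn (mem_Ici.mpr hy.1) (mem_Ici.mpr hlmem.1) (hy.2.trans hgl.symm)⟩

private lemma middle (a b c α β γ M l : ℝ) (hab : a ≠ b) (hα : α ≠ 0) (hβ : β ≠ 0)
    (hMa : |2*a| + 1 ≤ M) (hMb : |2*b| + 1 ≤ M) (hl : |l| < M) :
    min (α^2) (β^2) / (2*M)^2 ≤ α^2/(l-2*a)^2 + β^2/(l-2*b)^2 + γ^2/(l-2*c)^2 := by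
  have hM1 : 1 ≤ M := by have := abs_nonneg (2*a); linarith
  have hlM := abs_lt.mp hl
  have h1 : 0 ≤ α^2/(l-2*a)^2 := by positivity
  have h2 : 0 ≤ β^2/(l-2*b)^2 := by positivity
  have h3 : 0 ≤ γ^2/(l-2*c)^2 := by positivity
  have key : ∀ d k : ℝ, l ≠ 2*d → |2*d| + 1 ≤ M → min (α^2) (β^2) ≤ k^2 →
      min (α^2) (β^2) / (2*M)^2 ≤ k^2/(l-2*d)^2 := by
    intro d k hld hdM hmin
    have habs := abs_le.mp (show |2*d| ≤ M - 1 by linarith)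
    have hpos : 0 < (l-2*d)^2 := sq_pos' (sub_ne_zero.mpr hld)
    have hled : (l-2*d)^2 ≤ (2*M)^2 := by nlinarith
    exact div_le_div₀ (sq_nonneg k) hmin hpos hled
  by_cases hla : l = 2*a
  · have hlb : l ≠ 2*b := by
      intro h; exact hab (by linarith : a = b)
    have := key b β hlb hMb (min_le_right _ _)
    linarith
  · have := key a α hla hMa (min_le_left _ _)
    linarith

/-- For pairwise distinct `a b c` and `α β γ` all nonzero, every
sphere of sufficiently small radius `r > 0` contains exactly two points of the
set of relative equilibria `R_{α,β,γ}`. -/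
theorem stmt_17 (a b c α β γ : ℝ) (hab : a ≠ b) (hbc : b ≠ c) (hac : a ≠ c)
    (hα : α ≠ 0) (hβ : β ≠ 0) (hγ : γ ≠ 0) :
    ∃ ε > 0, ∀ r : ℝ, 0 < r → r < ε →
      ({μ : EuclideanSpace ℝ (Fin 3) |
          (!![2*a*(μ 0) + α, 2*b*(μ 1) + β, 2*c*(μ 2) + γ; μ 0, μ 1, μ 2] :
            Matrix (Fin 2) (Fin 3) ℝ).rank ≤ 1 ∧ ‖μ‖ = r}.encard = 2) := by
  have hα2 := sq_pos' hα
  have hβ2 := sq_pos' hβ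
  set M : ℝ := |2*a| + |2*b| + |2*c| + 1 with hM
  have hMa : |2*a| + 1 ≤ M := by
    simp only [hM]; linarith [abs_nonneg (2*b), abs_nonneg (2*c)]
  have hMb : |2*b| + 1 ≤ M := by
    simp only [hM]; linarith [abs_nonneg (2*a), abs_nonneg (2*c)]
  have hMc : |2*c| + 1 ≤ M := by
    simp only [hM]; linarith [abs_nonneg (2*a), abs_nonneg (2*b)]
  have hM1 : (1:ℝ) ≤ M := by linarith [abs_nonneg (2*a), hMa]
  have ha1 : 2*a + 1 ≤ M := by linarith [le_abs_self (2*a)]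
  have hb1 : 2*b + 1 ≤ M := by linarith [le_abs_self (2*b)]
  have hc1 : 2*c + 1 ≤ M := by linarith [le_abs_self (2*c)]
  have ha2 : 2*(-a) + 1 ≤ M := by linarith [neg_abs_le (2*a)]
  have hb2 : 2*(-b) + 1 ≤ M := by linarith [neg_abs_le (2*b)]
  have hc2 : 2*(-c) + 1 ≤ M := by linarith [neg_abs_le (2*c)]
  obtain ⟨δ₁, hδ₁, H₁⟩ := pos_side a b c α β γ M hα hβ hγ ha1 hb1 hc1
  obtain ⟨δ₂, hδ₂, H₂⟩ := pos_side (-a) (-b) (-c) α β γ M hα hβ hγ ha2 hb2 hc2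
  set δm : ℝ := min (α^2) (β^2) / (2*M)^2 with hδm
  have hδm0 : 0 < δm := div_pos (lt_min hα2 hβ2) (by positivity)
  set δ : ℝ := min (min δ₁ δ₂) δm with hδ
  have hδ0 : 0 < δ := lt_min (lt_min hδ₁ hδ₂) hδm0
  refine ⟨Real.sqrt δ, Real.sqrt_pos.mpr hδ0, ?_⟩
  intro r hr hrε
  have hr2 : r^2 < δ := (Real.lt_sqrt hr.le).mp hrε
  obtain ⟨l₁, ⟨hl₁M, hgl₁⟩, hl₁u⟩ :=
    H₁ r hr (lt_of_lt_of_le hr2 ((min_le_left _ _).trans (min_le_left _ _)))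
  obtain ⟨l₂, ⟨hl₂M, hgl₂⟩, hl₂u⟩ :=
    H₂ r hr (lt_of_lt_of_le hr2 ((min_le_left _ _).trans (min_le_right _ _)))
  have hr2m : r^2 < δm := lt_of_lt_of_le hr2 (min_le_right _ _)
  -- denominators
  have d1a : (1:ℝ) ≤ l₁ - 2*a := by linarith [le_abs_self (2*a)]
  have d1b : (1:ℝ) ≤ l₁ - 2*b := by linarith [le_abs_self (2*b)]
  have d1c : (1:ℝ) ≤ l₁ - 2*c := by linarith [le_abs_self (2*c)]
  have d2a : -l₂ - 2*a ≤ -1 := by linarith [neg_abs_le (2*a)]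
  have d2b : -l₂ - 2*b ≤ -1 := by linarith [neg_abs_le (2*b)]
  have d2c : -l₂ - 2*c ≤ -1 := by linarith [neg_abs_le (2*c)]
  -- the two points
  set μ₁ : EuclideanSpace ℝ (Fin 3) :=
    WithLp.toLp 2 ![α/(l₁-2*a), β/(l₁-2*b), γ/(l₁-2*c)] with hμ₁
  set μ₂ : EuclideanSpace ℝ (Fin 3) :=
    WithLp.toLp 2 ![α/(-l₂-2*a), β/(-l₂-2*b), γ/(-l₂-2*c)] with hμ₂
  have hgl₂' : α^2/(-l₂-2*a)^2 + β^2/(-l₂-2*b)^2 + γ^2/(-l₂-2*c)^2 = r^2 := by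
    rw [show (-l₂-2*a)^2 = (l₂-2*(-a))^2 by ring, show (-l₂-2*b)^2 = (l₂-2*(-b))^2 by ring,
      show (-l₂-2*c)^2 = (l₂-2*(-c))^2 by ring]
    exact hgl₂
  have hne : μ₁ ≠ μ₂ := by
    intro h
    have e : α/(l₁-2*a) = α/(-l₂-2*a) := congrArg (· 0) h
    rw [div_eq_div_iff (by linarith) (by linarith : -l₂-2*a ≠ 0)] at e
    have := mul_left_cancel₀ hα e
    linarith
  have hSeq : {μ : EuclideanSpace ℝ (Fin 3) |
      (!![2*a*(μ 0) + α, 2*b*(μ 1) + β, 2*c*(μ 2) + γ; μ 0, μ 1, μ 2] :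
        Matrix (Fin 2) (Fin 3) ℝ).rank ≤ 1 ∧ ‖μ‖ = r} = {μ₁, μ₂} := by
    ext μ
    simp only [mem_setOf_eq, mem_insert_iff, mem_singleton_iff]
    rw [mem_iff a b c α β γ hα hβ hγ μ r hr]
    constructor
    · rintro ⟨t, hta, htb, htc, h0, h1, h2, hsum⟩
      have hmid : ¬ |t| < M := by
        intro hlt
        have := middle a b c α β γ M t hab hα hβ hMa hMb hlt
        rw [hsum] at this
        exact absurd hr2m (not_lt.mpr this)
      rcases le_abs.mp (not_lt.mp hmid) with hcase | hcase
      · left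
        have ht : t = l₁ := hl₁u t ⟨hcase, hsum⟩
        subst ht
        ext i
        fin_cases i
        · exact h0
        · exact h1
        · exact h2
      · right
        have hsum' : α^2/((-t)-2*(-a))^2 + β^2/((-t)-2*(-b))^2 + γ^2/((-t)-2*(-c))^2 = r^2 := by
          rw [show ((-t)-2*(-a))^2 = (t-2*a)^2 by ring, show ((-t)-2*(-b))^2 = (t-2*b)^2 by ring,
            show ((-t)-2*(-c))^2 = (t-2*c)^2 by ring]
          exact hsum
        have ht : -t = l₂ := hl₂u (-t) ⟨hcase, hsum'⟩
        have ht' : t = -l₂ := by linarith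
        subst ht'
        ext i
        fin_cases i
        · exact h0
        · exact h1
        · exact h2
    · rintro (rfl | rfl)
      · exact ⟨l₁, by linarith, by linarith, by linarith, rfl, rfl, rfl, hgl₁⟩
      · exact ⟨-l₂, by linarith, by linarith, by linarith, rfl, rfl, rfl, hgl₂'⟩
  rw [hSeq]
  exact Set.encard_pair hne
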